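/- The number of quadruples ((r₁,s₁),(r₂,s₂),(r₃,s₃),(r₄,s₄)), with each rⱼ ∈ {+1,-1} and each sⱼ ∈ {0, +, -, 2}, such that K_{r₁,s₁} - K_{r₂,s₂} + K_{r₃,s₃} - K_{r₄,s₄} ∈ (2π/a)·ℤ², where K_{r,±} = (rQ/a, ±rQ/a), K_{+,0} = (π/a, 0), K_{-,0} = (0, π/a), K_{-,2} = (0,0), K_{+,2} = (π/a, π/a), is exactly 196, provided Q ∈ (0, π), Q ≠ π/2, and Q/π is irrational. -/

import Mathlib

open Real

/-- The sign ±1 associated with the chirality index r (0 ↦ +1, 1 ↦ -1). -/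
def chSign : Fin 2 → ℝ := fun r => if r = 0 then 1 else -1

/-- The eight points K_{r,s} in the Brillouin zone: s = 0 antinodal,
    s = 1 nodal (+), s = 2 nodal (-), s = 3 in/out. -/
noncomputable def Kpt (a Q : ℝ) : Fin 2 → Fin 4 → ℝ × ℝ := fun r s =>
  if s = 0 then (if r = 0 then (π / a, 0) else (0, π / a))
  else if s = 1 then (chSign r * Q / a, chSign r * Q / a)
  else if s = 2 then (chSign r * Q / a, -(chSign r * Q / a))
  else (if r = 0 then (π / a, π / a) else (0, 0))

/-- Integer coefficients ((ax, bx), (ay, by)) so that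
    K_{r,s} = ((ax·π + bx·Q)/a, (ay·π + by·Q)/a). -/
def Kco : Fin 2 → Fin 4 → (ℤ × ℤ) × (ℤ × ℤ) := fun r s =>
  if s = 0 then (if r = 0 then ((1, 0), (0, 0)) else ((0, 0), (1, 0)))
  else if s = 1 then (if r = 0 then ((0, 1), (0, 1)) else ((0, -1), (0, -1)))
  else if s = 2 then (if r = 0 then ((0, 1), (0, -1)) else ((0, -1), (0, 1)))
  else (if r = 0 then ((1, 0), (1, 0)) else ((0, 0), (0, 0)))

lemma Kpt_eq (a Q : ℝ) (r : Fin 2) (s : Fin 4) :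
    Kpt a Q r s =
      ((((Kco r s).1.1 : ℝ) * π + ((Kco r s).1.2 : ℝ) * Q) / a,
       (((Kco r s).2.1 : ℝ) * π + ((Kco r s).2.2 : ℝ) * Q) / a) := by
  fin_cases r <;> fin_cases s <;>
    simp [Kpt, Kco, chSign] <;> ring_nf <;> norm_num <;> ring

/-- The decidable integer predicate equivalent to momentum conservation. -/
def goodQ (q : (Fin 2 × Fin 4) × (Fin 2 × Fin 4) × (Fin 2 × Fin 4) × (Fin 2 × Fin 4)) :
    Prop :=
  let c1 := Kco q.1.1 q.1.2
  let c2 := Kco q.2.1.1 q.2.1.2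
  let c3 := Kco q.2.2.1.1 q.2.2.1.2
  let c4 := Kco q.2.2.2.1 q.2.2.2.2
  c1.1.2 - c2.1.2 + c3.1.2 - c4.1.2 = 0 ∧
  Even (c1.1.1 - c2.1.1 + c3.1.1 - c4.1.1) ∧
  c1.2.2 - c2.2.2 + c3.2.2 - c4.2.2 = 0 ∧
  Even (c1.2.1 - c2.2.1 + c3.2.1 - c4.2.1)

instance : DecidablePred goodQ := fun q => by unfold goodQ; infer_instance

/-- For generic Q (Q/π irrational, 0 < Q < π, Q ≠ π/2), exactly 196 of the
    4096 flavor quadruples satisfy the momentum-conservation constraint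
    K_{r₁,s₁} - K_{r₂,s₂} + K_{r₃,s₃} - K_{r₄,s₄} ∈ (2π/a)ℤ². -/
theorem stmt_19 (a Q : ℝ) (ha : 0 < a) (hQ0 : 0 < Q) (hQπ : Q < π)
    (hQhalf : Q ≠ π / 2) (hirr : Irrational (Q / π)) :
    Nat.card {q : (Fin 2 × Fin 4) × (Fin 2 × Fin 4) × (Fin 2 × Fin 4) × (Fin 2 × Fin 4) //
      ∃ m n : ℤ,
        Kpt a Q q.1.1 q.1.2 - Kpt a Q q.2.1.1 q.2.1.2
          + Kpt a Q q.2.2.1.1 q.2.2.1.2 - Kpt a Q q.2.2.2.1 q.2.2.2.2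
        = ((2 * π / a) * (m : ℝ), (2 * π / a) * (n : ℝ))} = 196 := by
  have hπ : (π : ℝ) ≠ 0 := Real.pi_ne_zero
  have ha' : a ≠ 0 := ne_of_gt ha
  -- scalar key lemma
  have key : ∀ A B : ℤ, (∃ m : ℤ, (A : ℝ) * π + (B : ℝ) * Q = 2 * π * m) ↔
      (B = 0 ∧ Even A) := by
    intro A B
    constructor
    · rintro ⟨m, h⟩
      have hB : B = 0 := by
        by_contra hB
        apply hirr
        refine ⟨((2 * m - A : ℤ) : ℚ) / (B : ℚ), ?_⟩
        have hBR : (B : ℝ) ≠ 0 := Int.cast_ne_zero.mpr hB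
        push_cast
        rw [div_eq_div_iff hBR hπ]
        linarith
      refine ⟨hB, ?_⟩
      rw [hB] at h
      push_cast at h
      have hA : (A : ℝ) = 2 * m := by
        have := mul_right_cancel₀ hπ (by linarith : (A : ℝ) * π = (2 * m) * π)
        exact this
      have : A = 2 * m := by exact_mod_cast hA
      exact ⟨m, by omega⟩
    · rintro ⟨hB, k, hk⟩
      refine ⟨k, ?_⟩
      rw [hB, hk]
      push_cast
      ring
  -- equivalence of the condition with goodQ
  have equiv : ∀ q : (Fin 2 × Fin 4) × (Fin 2 × Fin 4) × (Fin 2 × Fin 4) × (Fin 2 × Fin 4),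
      (∃ m n : ℤ,
        Kpt a Q q.1.1 q.1.2 - Kpt a Q q.2.1.1 q.2.1.2
          + Kpt a Q q.2.2.1.1 q.2.2.1.2 - Kpt a Q q.2.2.2.1 q.2.2.2.2
        = ((2 * π / a) * (m : ℝ), (2 * π / a) * (n : ℝ))) ↔ goodQ q := by
    intro q
    obtain ⟨⟨r1, s1⟩, ⟨r2, s2⟩, ⟨r3, s3⟩, ⟨r4, s4⟩⟩ := q
    rw [Kpt_eq, Kpt_eq, Kpt_eq, Kpt_eq]
    set c1 := Kco r1 s1
    set c2 := Kco r2 s2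
    set c3 := Kco r3 s3
    set c4 := Kco r4 s4
    have hx : ∀ m : ℤ,
        (((c1.1.1 : ℝ) * π + (c1.1.2 : ℝ) * Q) / a - (((c2.1.1 : ℝ)) * π + (c2.1.2 : ℝ) * Q) / a
          + (((c3.1.1 : ℝ)) * π + (c3.1.2 : ℝ) * Q) / a - (((c4.1.1 : ℝ)) * π + (c4.1.2 : ℝ) * Q) / a
          = (2 * π / a) * (m : ℝ)) ↔
        (((c1.1.1 - c2.1.1 + c3.1.1 - c4.1.1 : ℤ) : ℝ) * π
          + ((c1.1.2 - c2.1.2 + c3.1.2 - c4.1.2 : ℤ) : ℝ) * Q = 2 * π * m) := by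
      intro m
      rw [div_sub_div_same, ← add_div, div_sub_div_same, div_eq_iff ha']
      have han : 2 * π / a * (m : ℝ) * a = 2 * π * m := by field_simp
      rw [han]
      push_cast
      constructor <;> intro h <;> linarith
    have hy : ∀ m : ℤ,
        (((c1.2.1 : ℝ) * π + (c1.2.2 : ℝ) * Q) / a - (((c2.2.1 : ℝ)) * π + (c2.2.2 : ℝ) * Q) / a
          + (((c3.2.1 : ℝ)) * π + (c3.2.2 : ℝ) * Q) / a - (((c4.2.1 : ℝ)) * π + (c4.2.2 : ℝ) * Q) / a
          = (2 * π / a) * (m : ℝ)) ↔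
        (((c1.2.1 - c2.2.1 + c3.2.1 - c4.2.1 : ℤ) : ℝ) * π
          + ((c1.2.2 - c2.2.2 + c3.2.2 - c4.2.2 : ℤ) : ℝ) * Q = 2 * π * m) := by
      intro m
      rw [div_sub_div_same, ← add_div, div_sub_div_same, div_eq_iff ha']
      have han : 2 * π / a * (m : ℝ) * a = 2 * π * m := by field_simp
      rw [han]
      push_cast
      constructor <;> intro h <;> linarith
    constructor
    · rintro ⟨m, n, h⟩
      rw [Prod.ext_iff] at h
      obtain ⟨h1, h2⟩ := h
      simp only [Prod.fst_sub, Prod.fst_add, Prod.snd_sub, Prod.snd_add] at h1 h2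
      have e1 := (key _ _).mp ⟨m, (hx m).mp h1⟩
      have e2 := (key _ _).mp ⟨n, (hy n).mp h2⟩
      exact ⟨e1.1, e1.2, e2.1, e2.2⟩
    · rintro ⟨g1, g2, g3, g4⟩
      obtain ⟨m, hm⟩ := (key _ _).mpr ⟨g1, g2⟩
      obtain ⟨n, hn⟩ := (key _ _).mpr ⟨g3, g4⟩
      refine ⟨m, n, ?_⟩
      rw [Prod.ext_iff]
      simp only [Prod.fst_sub, Prod.fst_add, Prod.snd_sub, Prod.snd_add]
      exact ⟨(hx m).mpr hm, (hy n).mpr hn⟩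
  rw [Nat.card_congr (Equiv.subtypeEquivRight equiv), Nat.card_eq_fintype_card]
  set_option maxRecDepth 100000 in decide
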